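/- Let ν be a symmetric Lévy measure on ℝⁿ, Ω ⊆ ℝⁿ a nonempty bounded open set, f ∈ L²(Ω), and g a function on ℝⁿ∖Ω. A function u ∈ V_ν^Ω(ℝⁿ) is a weak solution of Lu = f in Ω, u = g on ℝⁿ∖Ω if and only if u = g a.e. on ℝⁿ∖Ω and u minimizes the energy functional E(v) = (1/4)∫∫_{(ℝⁿ×ℝⁿ)∖((ℝⁿ∖Ω)×(ℝⁿ∖Ω))} (v(x) − v(y))² dν_x(y) dx − ∫_Ω f v dx among all v ∈ V_ν^Ω(ℝⁿ) with v = g a.e. on ℝⁿ∖Ω (here ν_x(A) = ν(A − x)). -/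

import Mathlib

open MeasureTheory Filter Set Topology
open scoped ENNReal Topology Pointwise Classical

noncomputable section

abbrev Eucl (n : ℕ) : Type := EuclideanSpace ℝ (Fin n)

/-- A symmetric Lévy measure on ℝⁿ: ν({0}) = 0, ν(−A) = ν(A) for Borel A, and
∫ min(1,|y|²) dν < ∞. -/
def IsSymmLevy {n : ℕ} (ν : Measure (Eucl n)) : Prop :=
  ν {0} = 0 ∧ (∀ A : Set (Eucl n), MeasurableSet A → ν (-A) = ν A) ∧
    (∫⁻ y, ENNReal.ofReal (min 1 (‖y‖ ^ 2)) ∂ν) < ⊤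

/-- The truncated nonlocal operator: ∫_{|y| ≥ ε} (u(x) − u(x+y)) dν(y). -/
def truncL {n : ℕ} (ν : Measure (Eucl n)) (u : Eucl n → ℝ) (x : Eucl n) (ε : ℝ) : ℝ :=
  ∫ y in {y : Eucl n | ε ≤ ‖y‖}, (u x - u (x + y)) ∂ν

/-- `Lu(x)` is well defined with value `l`: the integrands are ν-integrable away from the
origin, and the principal value limit exists and equals `l`. -/
def HasLAt {n : ℕ} (ν : Measure (Eucl n)) (u : Eucl n → ℝ) (x : Eucl n) (l : ℝ) : Prop :=
  (∀ ε : ℝ, 0 < ε → IntegrableOn (fun y => u x - u (x + y)) {y : Eucl n | ε ≤ ‖y‖} ν) ∧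
  Tendsto (truncL ν u x) (𝓝[>] (0:ℝ)) (𝓝 l)

/-- Squared norm of the generalized Sobolev space V_ν^D(ℝⁿ). -/
def sobSq {n : ℕ} (ν : Measure (Eucl n)) (D : Set (Eucl n)) (u : Eucl n → ℝ) : ℝ≥0∞ :=
  (∫⁻ x in D, ENNReal.ofReal (u x ^ 2)) +
    (1/2) * ∫⁻ y in D, ∫⁻ z, ENNReal.ofReal ((u y - u (y + z)) ^ 2) ∂ν

/-- Membership in V_ν^D(ℝⁿ). -/
def MemV {n : ℕ} (ν : Measure (Eucl n)) (D : Set (Eucl n)) (u : Eucl n → ℝ) : Prop :=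
  Measurable u ∧ sobSq ν D u < ⊤

/-- Membership in H_ν^D(ℝⁿ): members of V_ν^D vanishing a.e. outside D. -/
def MemH {n : ℕ} (ν : Measure (Eucl n)) (D : Set (Eucl n)) (u : Eucl n → ℝ) : Prop :=
  MemV ν D u ∧ ∀ᵐ x ∂(volume : Measure (Eucl n)), x ∉ D → u x = 0

/-- The quadratic form ⟨u,u⟩_ν (with values in [0,∞]). -/
def formQ {n : ℕ} (ν : Measure (Eucl n)) (u : Eucl n → ℝ) : ℝ≥0∞ :=
  (1/2) * ∫⁻ y, ∫⁻ z, ENNReal.ofReal ((u y - u (y + z)) ^ 2) ∂ν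

/-- The bilinear form ⟨u,v⟩_ν. -/
def formB {n : ℕ} (ν : Measure (Eucl n)) (u v : Eucl n → ℝ) : ℝ :=
  (1/2) * ∫ y, (∫ z, (u y - u (y + z)) * (v y - v (y + z)) ∂ν)

/-- Weak solution of Lu = f in Ω, u = g on ℝⁿ∖Ω. -/
def IsWeakSol {n : ℕ} (ν : Measure (Eucl n)) (Ω : Set (Eucl n))
    (f g u : Eucl n → ℝ) : Prop :=
  MemV ν Ω u ∧ (∀ᵐ x ∂(volume : Measure (Eucl n)), x ∉ Ω → u x = g x) ∧
  ∀ φ : Eucl n → ℝ, MemH ν Ω φ → formB ν u φ = ∫ x in Ω, f x * φ x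

end

/-- The energy functional E(v) = (1/4)∫∫_{(ℝⁿ×ℝⁿ)∖(Ωᶜ×Ωᶜ)} (v(x)−v(y))² dν_x(y) dx − ∫_Ω f v. -/
noncomputable def energy {n : ℕ} (ν : Measure (Eucl n)) (Ω : Set (Eucl n))
    (f v : Eucl n → ℝ) : ℝ :=
  (1/4) * (∫ x, ∫ z, (if x ∈ Ω ∨ x + z ∈ Ω then (v x - v (x + z)) ^ 2 else 0) ∂ν)
    - ∫ x in Ω, f x * v x

namespace DirAux
noncomputable section

variable {n : ℕ} {ν : Measure (Eucl n)} {Ω : Set (Eucl n)}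

/-- product measure -/
abbrev pm (ν : Measure (Eucl n)) : Measure (Eucl n × Eucl n) :=
  (volume : Measure (Eucl n)).prod ν

def Fd (w : Eucl n → ℝ) : Eucl n × Eucl n → ℝ := fun p => w p.1 - w (p.1 + p.2)

def Tm (n : ℕ) : Eucl n × Eucl n → Eucl n × Eucl n := fun p => (p.1 + p.2, -p.2)

def Sset (Ω : Set (Eucl n)) : Set (Eucl n × Eucl n) := {p | p.1 ∈ Ω ∨ p.1 + p.2 ∈ Ω}

lemma measurable_Fd {w : Eucl n → ℝ} (hw : Measurable w) : Measurable (Fd w) :=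
  (hw.comp measurable_fst).sub (hw.comp (measurable_fst.add measurable_snd))

lemma measurable_Tm : Measurable (Tm n) :=
  (measurable_fst.add measurable_snd).prodMk measurable_snd.neg

lemma measurableSet_Sset (hΩ : MeasurableSet Ω) : MeasurableSet (Sset Ω) :=
  ((measurable_fst hΩ)).union ((measurable_fst.add measurable_snd) hΩ)

lemma nu_annulus_fin (hν : IsSymmLevy ν) {ε : ℝ} (hε : 0 < ε) :
    ν {y : Eucl n | ε ≤ ‖y‖} < ⊤ := by
  set c : ℝ≥0∞ := ENNReal.ofReal (min 1 (ε ^ 2)) with hc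
  have hc0 : c ≠ 0 := by
    rw [hc]
    simp only [Ne, ENNReal.ofReal_eq_zero, not_le, lt_min_iff]
    constructor <;> positivity
  have hmeas : MeasurableSet {y : Eucl n | ε ≤ ‖y‖} :=
    measurableSet_le measurable_const measurable_norm
  have hle : c * ν {y : Eucl n | ε ≤ ‖y‖} ≤ ∫⁻ y, ENNReal.ofReal (min 1 (‖y‖ ^ 2)) ∂ν := by
    rw [← setLIntegral_const]
    refine le_trans (setLIntegral_mono (by measurability) fun y hy => ?_)
      (setLIntegral_le_lintegral _ _)
    exact ENNReal.ofReal_le_ofReal (min_le_min le_rfl (by nlinarith [mem_setOf_eq ▸ hy]))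
  by_contra h
  rw [not_lt, top_le_iff] at h
  rw [h, ENNReal.mul_top hc0] at hle
  exact absurd (lt_of_le_of_lt hle hν.2.2) (lt_irrefl ⊤)

lemma nu_sigmaFinite (hν : IsSymmLevy ν) : SigmaFinite ν := by
  refine ⟨⟨⟨fun k => {0} ∪ {y : Eucl n | 1 / ((k : ℝ) + 1) ≤ ‖y‖}, fun _ => trivial,
    fun k => ?_, ?_⟩⟩⟩
  · refine (measure_union_le _ _).trans_lt ?_
    rw [hν.1, zero_add]
    exact nu_annulus_fin hν (by positivity)
  · ext x
    simp only [mem_iUnion, mem_univ, iff_true, mem_union, mem_singleton_iff, mem_setOf_eq]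
    rcases eq_or_ne x 0 with h | h
    · exact ⟨0, Or.inl h⟩
    · have hx : 0 < ‖x‖ := norm_pos_iff.mpr h
      obtain ⟨k, hk⟩ := exists_nat_gt (1 / ‖x‖)
      refine ⟨k, Or.inr ?_⟩
      rw [div_le_iff₀ (by positivity)]
      rw [div_lt_iff₀ hx] at hk
      nlinarith

lemma map_neg_nu (hν : IsSymmLevy ν) : Measure.map Neg.neg ν = ν := by
  ext A hA
  rw [Measure.map_apply measurable_neg hA]
  have h : Neg.neg ⁻¹' A = -A := by ext x; simp [Set.mem_neg]
  rw [h, hν.2.1 A hA]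

lemma mpT (hν : IsSymmLevy ν) [SigmaFinite ν] : MeasurePreserving (Tm n) (pm ν) (pm ν) := by
  have h1 : MeasurePreserving (fun p : Eucl n × Eucl n => (p.1 + p.2, p.2)) (pm ν) (pm ν) :=
    measurePreserving_add_prod _ _
  have h2 : MeasurePreserving (Prod.map (id : Eucl n → Eucl n) Neg.neg) (pm ν) (pm ν) :=
    (MeasurePreserving.id _).prod ⟨measurable_neg, map_neg_nu hν⟩
  have heq : Tm n = (Prod.map (id : Eucl n → Eucl n) Neg.neg) ∘
      (fun p : Eucl n × Eucl n => (p.1 + p.2, p.2)) := by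
    funext p; simp [Tm, Prod.map]
  rw [heq]
  exact h2.comp h1

lemma Fd_Tm {w : Eucl n → ℝ} (p : Eucl n × Eucl n) : Fd w (Tm n p) = - Fd w p := by
  simp [Fd, Tm, add_neg_cancel_right]

lemma Tm_preimage_prod (A : Set (Eucl n)) :
    Tm n ⁻¹' (A ×ˢ (univ : Set (Eucl n))) = {p : Eucl n × Eucl n | p.1 + p.2 ∈ A} := by
  ext p; simp [Tm]

lemma Sset_eq : Sset Ω = (Ω ×ˢ (univ : Set (Eucl n))) ∪ Tm n ⁻¹' (Ω ×ˢ univ) := by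
  rw [Tm_preimage_prod]
  ext p; simp [Sset]

/-- second sobolev term as a product lintegral -/
lemma sob2_eq [SigmaFinite ν] {w : Eucl n → ℝ} (hw : Measurable w) :
    ∫⁻ y in Ω, ∫⁻ z, ENNReal.ofReal ((w y - w (y + z)) ^ 2) ∂ν
      = ∫⁻ p, ENNReal.ofReal (Fd w p ^ 2) ∂(((volume : Measure (Eucl n)).restrict Ω).prod ν) := by
  rw [lintegral_prod _ (((measurable_Fd hw).pow_const 2).ennreal_ofReal).aemeasurable]
  rfl

lemma prod_restrict_eq [SigmaFinite ν] {w : Eucl n → ℝ} (hΩ : MeasurableSet Ω) :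
    ∫⁻ p in Ω ×ˢ (univ : Set (Eucl n)), ENNReal.ofReal (Fd w p ^ 2) ∂(pm ν)
      = ∫⁻ p, ENNReal.ofReal (Fd w p ^ 2) ∂(((volume : Measure (Eucl n)).restrict Ω).prod ν) := by
  rw [← Measure.prod_restrict, Measure.restrict_univ]

lemma half_lt_top {X : ℝ≥0∞} (h : (1/2 : ℝ≥0∞) * X < ⊤) : X < ⊤ := by
  by_contra hX
  rw [not_lt, top_le_iff] at hX
  rw [hX, ENNReal.mul_top (by norm_num)] at h
  exact lt_irrefl _ h

lemma sob2_fin {w : Eucl n → ℝ} (hs : sobSq ν Ω w < ⊤) :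
    (∫⁻ y in Ω, ∫⁻ z, ENNReal.ofReal ((w y - w (y + z)) ^ 2) ∂ν) < ⊤ :=
  half_lt_top (lt_of_le_of_lt le_add_self hs)

lemma sob1_fin {w : Eucl n → ℝ} (hs : sobSq ν Ω w < ⊤) :
    (∫⁻ x in Ω, ENNReal.ofReal (w x ^ 2)) < ⊤ :=
  lt_of_le_of_lt le_self_add hs

lemma lint_S_fin (hν : IsSymmLevy ν) [SigmaFinite ν] (hΩ : MeasurableSet Ω)
    {w : Eucl n → ℝ} (hw : Measurable w) (hs : sobSq ν Ω w < ⊤) :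
    ∫⁻ p in Sset Ω, ENNReal.ofReal (Fd w p ^ 2) ∂(pm ν) < ⊤ := by
  have hA : ∫⁻ p in Ω ×ˢ (univ : Set (Eucl n)), ENNReal.ofReal (Fd w p ^ 2) ∂(pm ν) < ⊤ := by
    rw [prod_restrict_eq hΩ, ← sob2_eq hw]
    exact sob2_fin hs
  have hB : ∫⁻ p in Tm n ⁻¹' (Ω ×ˢ (univ : Set (Eucl n))), ENNReal.ofReal (Fd w p ^ 2) ∂(pm ν)
      = ∫⁻ p in Ω ×ˢ (univ : Set (Eucl n)), ENNReal.ofReal (Fd w p ^ 2) ∂(pm ν) := by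
    have h := ((mpT hν).restrict_preimage (hΩ.prod MeasurableSet.univ)).lintegral_comp
      ((measurable_Fd hw).pow_const 2).ennreal_ofReal
    rw [← h]
    refine lintegral_congr fun p => ?_
    rw [Fd_Tm, neg_sq]
  calc ∫⁻ p in Sset Ω, ENNReal.ofReal (Fd w p ^ 2) ∂(pm ν)
      ≤ (∫⁻ p in Ω ×ˢ (univ : Set (Eucl n)), ENNReal.ofReal (Fd w p ^ 2) ∂(pm ν))
        + ∫⁻ p in Tm n ⁻¹' (Ω ×ˢ (univ : Set (Eucl n))), ENNReal.ofReal (Fd w p ^ 2) ∂(pm ν) := by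
        rw [Sset_eq]; exact lintegral_union_le _ _ _
    _ < ⊤ := by rw [hB]; exact ENNReal.add_lt_top.mpr ⟨hA, hA⟩

lemma integrableOn_Fd_sq (hν : IsSymmLevy ν) [SigmaFinite ν] (hΩ : MeasurableSet Ω)
    {w : Eucl n → ℝ} (hw : Measurable w) (hs : sobSq ν Ω w < ⊤) :
    IntegrableOn (fun p => Fd w p ^ 2) (Sset Ω) (pm ν) := by
  refine ⟨(((measurable_Fd hw).pow_const 2).aestronglyMeasurable), ?_⟩
  rw [hasFiniteIntegral_iff_ofReal (ae_of_all _ fun p => sq_nonneg _)]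
  exact lint_S_fin hν hΩ hw hs

lemma integrable_sq_on {w : Eucl n → ℝ} (hw : Measurable w) (hs : sobSq ν Ω w < ⊤) :
    Integrable (fun x => w x ^ 2) ((volume : Measure (Eucl n)).restrict Ω) := by
  refine ⟨((hw.pow_const 2).aestronglyMeasurable), ?_⟩
  rw [hasFiniteIntegral_iff_ofReal (ae_of_all _ fun p => sq_nonneg _)]
  exact sob1_fin hs

lemma integrable_mul_of_sq {α : Type*} [MeasurableSpace α] {μ : Measure α} {a b : α → ℝ}
    (ha : AEStronglyMeasurable a μ) (hb : AEStronglyMeasurable b μ)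
    (ha2 : Integrable (fun x => a x ^ 2) μ) (hb2 : Integrable (fun x => b x ^ 2) μ) :
    Integrable (fun x => a x * b x) μ := by
  refine (ha2.add hb2).mono' (ha.mul hb) (ae_of_all _ fun x => ?_)
  rw [Pi.add_apply, Real.norm_eq_abs, abs_mul]
  nlinarith [sq_nonneg (|a x| - |b x|), abs_nonneg (a x), abs_nonneg (b x),
    sq_abs (a x), sq_abs (b x)]


lemma ae_notin_S_Fd_zero (hν : IsSymmLevy ν) [SigmaFinite ν] {φ : Eucl n → ℝ}
    (hφ0 : ∀ᵐ x ∂(volume : Measure (Eucl n)), x ∉ Ω → φ x = 0) :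
    ∀ᵐ p ∂(pm ν), p ∉ Sset Ω → Fd φ p = 0 := by
  obtain ⟨N, hNsub, hNm, hN0⟩ := exists_measurable_superset_of_null (ae_iff.mp hφ0)
  have key : ∀ x : Eucl n, x ∉ N → x ∉ Ω → φ x = 0 := fun x hxN hxΩ => by
    by_contra hx
    exact hxN (hNsub fun h => hx (h hxΩ))
  have h1 : (pm ν) {p : Eucl n × Eucl n | p.1 ∈ N} = 0 := by
    have he : {p : Eucl n × Eucl n | p.1 ∈ N} = N ×ˢ (univ : Set (Eucl n)) := by
      ext p; simp
    rw [he, Measure.prod_prod, hN0, zero_mul]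
  have h2 : (pm ν) {p : Eucl n × Eucl n | p.1 + p.2 ∈ N} = 0 := by
    rw [← Tm_preimage_prod,
      (mpT hν).measure_preimage (hNm.prod MeasurableSet.univ).nullMeasurableSet,
      Measure.prod_prod, hN0, zero_mul]
  have a1 : ∀ᵐ p ∂(pm ν), p.1 ∉ N := by
    rw [ae_iff]; simpa using h1
  have a2 : ∀ᵐ p ∂(pm ν), p.1 + p.2 ∉ N := by
    rw [ae_iff]; simpa using h2
  filter_upwards [a1, a2] with p hp1 hp2 hpS
  have hnS : p.1 ∉ Ω ∧ p.1 + p.2 ∉ Ω := by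
    simpa [Sset, not_or] using hpS
  rw [Fd, key _ hp1 hnS.1, key _ hp2 hnS.2, sub_zero]

lemma energy_eq (hν : IsSymmLevy ν) [SigmaFinite ν] (hΩ : MeasurableSet Ω)
    {f w : Eucl n → ℝ} (hw : Measurable w) (hs : sobSq ν Ω w < ⊤) :
    energy ν Ω f w = (1/4) * (∫ p in Sset Ω, Fd w p ^ 2 ∂(pm ν)) - ∫ x in Ω, f x * w x := by
  have hS := measurableSet_Sset hΩ
  have hIOn := integrableOn_Fd_sq hν hΩ hw hs
  have hind : Integrable ((Sset Ω).indicator fun p => Fd w p ^ 2) (pm ν) :=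
    (integrable_indicator_iff hS).mpr hIOn
  have hfun : ∀ x z : Eucl n, (if x ∈ Ω ∨ x + z ∈ Ω then (w x - w (x + z)) ^ 2 else 0)
      = ((Sset Ω).indicator fun p => Fd w p ^ 2) (x, z) := by
    intro x z
    by_cases h : x ∈ Ω ∨ x + z ∈ Ω
    · rw [if_pos h, Set.indicator_of_mem (show (x, z) ∈ Sset Ω from h)]
      rfl
    · rw [if_neg h, Set.indicator_of_notMem (show (x, z) ∉ Sset Ω from h)]
  have hmain : (∫ x, ∫ z, (if x ∈ Ω ∨ x + z ∈ Ω then (w x - w (x + z)) ^ 2 else 0) ∂ν)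
      = ∫ p in Sset Ω, Fd w p ^ 2 ∂(pm ν) := by
    calc (∫ x, ∫ z, (if x ∈ Ω ∨ x + z ∈ Ω then (w x - w (x + z)) ^ 2 else 0) ∂ν)
        = ∫ x, ∫ z, ((Sset Ω).indicator fun p => Fd w p ^ 2) (x, z) ∂ν := by
          refine integral_congr_ae (ae_of_all _ fun x => ?_)
          exact integral_congr_ae (ae_of_all _ fun z => hfun x z)
      _ = ∫ p, ((Sset Ω).indicator fun p => Fd w p ^ 2) p ∂(pm ν) :=
          integral_integral (f := fun x z => ((Sset Ω).indicator fun p => Fd w p ^ 2) (x, z)) hind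
      _ = ∫ p in Sset Ω, Fd w p ^ 2 ∂(pm ν) := integral_indicator hS
  rw [energy, hmain]

lemma formB_eq (hν : IsSymmLevy ν) [SigmaFinite ν] (hΩ : MeasurableSet Ω) {u φ : Eucl n → ℝ}
    (hu : MemV ν Ω u) (hφ : MemV ν Ω φ)
    (hφ0 : ∀ᵐ x ∂(volume : Measure (Eucl n)), x ∉ Ω → φ x = 0) :
    formB ν u φ = (1/2) * ∫ p in Sset Ω, Fd u p * Fd φ p ∂(pm ν) := by
  have hS := measurableSet_Sset hΩ
  have hIOn : IntegrableOn (fun p => Fd u p * Fd φ p) (Sset Ω) (pm ν) :=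
    integrable_mul_of_sq (measurable_Fd hu.1).aestronglyMeasurable
      (measurable_Fd hφ.1).aestronglyMeasurable
      (integrableOn_Fd_sq hν hΩ hu.1 hu.2) (integrableOn_Fd_sq hν hΩ hφ.1 hφ.2)
  have hae : (fun p => Fd u p * Fd φ p) =ᵐ[pm ν]
      (Sset Ω).indicator fun p => Fd u p * Fd φ p := by
    filter_upwards [ae_notin_S_Fd_zero hν hφ0] with p hp
    by_cases hpS : p ∈ Sset Ω
    · rw [Set.indicator_of_mem hpS]
    · rw [Set.indicator_of_notMem hpS, hp hpS, mul_zero]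
  have hind : Integrable ((Sset Ω).indicator fun p => Fd u p * Fd φ p) (pm ν) :=
    (integrable_indicator_iff hS).mpr hIOn
  have hint : Integrable (fun p => Fd u p * Fd φ p) (pm ν) := hind.congr hae.symm
  rw [formB]
  congr 1
  calc (∫ y, ∫ z, (u y - u (y + z)) * (φ y - φ (y + z)) ∂ν)
      = ∫ p, Fd u p * Fd φ p ∂(pm ν) :=
        integral_integral (f := fun y z => Fd u (y, z) * Fd φ (y, z)) hint
    _ = ∫ p, ((Sset Ω).indicator fun p => Fd u p * Fd φ p) p ∂(pm ν) := integral_congr_ae hae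
    _ = ∫ p in Sset Ω, Fd u p * Fd φ p ∂(pm ν) := integral_indicator hS

lemma sq_lint_add_le {α : Type*} [MeasurableSpace α] (μ : Measure α) {a b : α → ℝ}
    (ha : Measurable a) (hb : Measurable b) :
    ∫⁻ x, ENNReal.ofReal ((a x + b x) ^ 2) ∂μ
      ≤ 2 * ∫⁻ x, ENNReal.ofReal (a x ^ 2) ∂μ + 2 * ∫⁻ x, ENNReal.ofReal (b x ^ 2) ∂μ := by
  have h : ∀ x, ENNReal.ofReal ((a x + b x) ^ 2)
      ≤ 2 * ENNReal.ofReal (a x ^ 2) + 2 * ENNReal.ofReal (b x ^ 2) := by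
    intro x
    calc ENNReal.ofReal ((a x + b x) ^ 2)
        ≤ ENNReal.ofReal (2 * a x ^ 2 + 2 * b x ^ 2) :=
          ENNReal.ofReal_le_ofReal (by nlinarith [sq_nonneg (a x - b x)])
      _ = 2 * ENNReal.ofReal (a x ^ 2) + 2 * ENNReal.ofReal (b x ^ 2) := by
          rw [ENNReal.ofReal_add (by positivity) (by positivity),
            ENNReal.ofReal_mul (by norm_num), ENNReal.ofReal_mul (by norm_num),
            ENNReal.ofReal_ofNat]
  calc ∫⁻ x, ENNReal.ofReal ((a x + b x) ^ 2) ∂μ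
      ≤ ∫⁻ x, (2 * ENNReal.ofReal (a x ^ 2) + 2 * ENNReal.ofReal (b x ^ 2)) ∂μ :=
        lintegral_mono h
    _ = 2 * ∫⁻ x, ENNReal.ofReal (a x ^ 2) ∂μ + 2 * ∫⁻ x, ENNReal.ofReal (b x ^ 2) ∂μ := by
        rw [lintegral_add_left (((ha.pow_const 2).ennreal_ofReal).const_mul 2),
          lintegral_const_mul 2 ((ha.pow_const 2).ennreal_ofReal),
          lintegral_const_mul 2 ((hb.pow_const 2).ennreal_ofReal)]

lemma lint_sq_smul {α : Type*} [MeasurableSpace α] (μ : Measure α) {b : α → ℝ}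
    (hb : Measurable b) (t : ℝ) :
    ∫⁻ x, ENNReal.ofReal ((t * b x) ^ 2) ∂μ
      = ENNReal.ofReal (t ^ 2) * ∫⁻ x, ENNReal.ofReal (b x ^ 2) ∂μ := by
  rw [← lintegral_const_mul _ ((hb.pow_const 2).ennreal_ofReal)]
  refine lintegral_congr fun x => ?_
  rw [mul_pow, ENNReal.ofReal_mul (sq_nonneg t)]

lemma memV_combo [SigmaFinite ν] {u φ : Eucl n → ℝ} (hu : MemV ν Ω u) (hφ : MemV ν Ω φ)
    (t : ℝ) : MemV ν Ω (fun x => u x + t * φ x) := by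
  have hm : Measurable (fun x => u x + t * φ x) := hu.1.add (hφ.1.const_mul t)
  refine ⟨hm, ?_⟩
  rw [sobSq]
  apply ENNReal.add_lt_top.mpr
  constructor
  · refine lt_of_le_of_lt (sq_lint_add_le _ hu.1 (hφ.1.const_mul t)) ?_
    apply ENNReal.add_lt_top.mpr
    refine ⟨ENNReal.mul_lt_top (by norm_num) (sob1_fin hu.2), ENNReal.mul_lt_top (by norm_num) ?_⟩
    rw [lint_sq_smul _ hφ.1 t]
    exact ENNReal.mul_lt_top ENNReal.ofReal_lt_top (sob1_fin hφ.2)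
  · refine ENNReal.mul_lt_top (by norm_num) ?_
    rw [sob2_eq hm]
    have hfe : (fun p => ENNReal.ofReal (Fd (fun x => u x + t * φ x) p ^ 2))
        = fun p => ENNReal.ofReal ((Fd u p + t * Fd φ p) ^ 2) := by
      funext p; congr 1; rw [Fd, Fd, Fd]; ring
    rw [hfe]
    refine lt_of_le_of_lt
      (sq_lint_add_le _ (measurable_Fd hu.1) ((measurable_Fd hφ.1).const_mul t)) ?_
    apply ENNReal.add_lt_top.mpr
    constructor
    · refine ENNReal.mul_lt_top (by norm_num) ?_
      rw [← sob2_eq hu.1]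
      exact sob2_fin hu.2
    · refine ENNReal.mul_lt_top (by norm_num) ?_
      rw [lint_sq_smul _ (measurable_Fd hφ.1) t, ← sob2_eq hφ.1]
      exact ENNReal.mul_lt_top ENNReal.ofReal_lt_top (sob2_fin hφ.2)

lemma energy_expand (hν : IsSymmLevy ν) [SigmaFinite ν] (hΩ : MeasurableSet Ω)
    {f u φ : Eucl n → ℝ}
    (hf2 : Integrable (fun x => f x ^ 2) ((volume : Measure (Eucl n)).restrict Ω))
    (hfm : AEStronglyMeasurable f ((volume : Measure (Eucl n)).restrict Ω))
    (hu : MemV ν Ω u) (hφ : MemV ν Ω φ) (t : ℝ) :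
    energy ν Ω f (fun x => u x + t * φ x)
      = energy ν Ω f u
        + t * ((1/2) * (∫ p in Sset Ω, Fd u p * Fd φ p ∂(pm ν)) - ∫ x in Ω, f x * φ x)
        + t ^ 2 * ((1/4) * ∫ p in Sset Ω, Fd φ p ^ 2 ∂(pm ν)) := by
  have hw := memV_combo hu hφ t
  rw [energy_eq hν hΩ hw.1 hw.2, energy_eq hν hΩ hu.1 hu.2]
  have hIu2 := integrableOn_Fd_sq hν hΩ hu.1 hu.2
  have hIφ2 := integrableOn_Fd_sq hν hΩ hφ.1 hφ.2
  have hIuφ : IntegrableOn (fun p => Fd u p * Fd φ p) (Sset Ω) (pm ν) :=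
    integrable_mul_of_sq (measurable_Fd hu.1).aestronglyMeasurable
      (measurable_Fd hφ.1).aestronglyMeasurable hIu2 hIφ2
  have h1 : ∫ p in Sset Ω, Fd (fun x => u x + t * φ x) p ^ 2 ∂(pm ν)
      = (∫ p in Sset Ω, Fd u p ^ 2 ∂(pm ν)) + ((2 * t) * ∫ p in Sset Ω, Fd u p * Fd φ p ∂(pm ν)
        + t ^ 2 * ∫ p in Sset Ω, Fd φ p ^ 2 ∂(pm ν)) := by
    have he : (fun p => Fd (fun x => u x + t * φ x) p ^ 2)
        = fun p => Fd u p ^ 2 + ((2 * t) * (Fd u p * Fd φ p) + t ^ 2 * Fd φ p ^ 2) := by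
      funext p; rw [Fd, Fd, Fd]; ring
    have ha : Integrable (fun p => (2 * t) * (Fd u p * Fd φ p)) ((pm ν).restrict (Sset Ω)) :=
      hIuφ.const_mul (2 * t)
    have hb : Integrable (fun p => t ^ 2 * Fd φ p ^ 2) ((pm ν).restrict (Sset Ω)) :=
      hIφ2.const_mul (t ^ 2)
    have hab : Integrable (fun p => 2 * t * (Fd u p * Fd φ p) + t ^ 2 * Fd φ p ^ 2)
        ((pm ν).restrict (Sset Ω)) := ha.add hb
    rw [he, integral_add hIu2 hab, integral_add ha hb, integral_const_mul,
      integral_const_mul]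
  have hIfu : Integrable (fun x => f x * u x) ((volume : Measure (Eucl n)).restrict Ω) :=
    integrable_mul_of_sq hfm hu.1.aestronglyMeasurable hf2 (integrable_sq_on hu.1 hu.2)
  have hIfφ : Integrable (fun x => f x * φ x) ((volume : Measure (Eucl n)).restrict Ω) :=
    integrable_mul_of_sq hfm hφ.1.aestronglyMeasurable hf2 (integrable_sq_on hφ.1 hφ.2)
  have h2 : (∫ x in Ω, f x * (u x + t * φ x))
      = (∫ x in Ω, f x * u x) + t * ∫ x in Ω, f x * φ x := by
    have he : (fun x => f x * (u x + t * φ x)) = fun x => f x * u x + t * (f x * φ x) := by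
      funext x; ring
    have hb : Integrable (fun x => t * (f x * φ x)) ((volume : Measure (Eucl n)).restrict Ω) :=
      hIfφ.const_mul t
    rw [he, integral_add hIfu hb, integral_const_mul]
  rw [h1]
  beta_reduce
  rw [h2]
  ring

lemma quad_aux {c d : ℝ} (hd : 0 ≤ d) (h : ∀ t : ℝ, 0 ≤ t * c + t ^ 2 * d) : 0 ≤ c := by
  by_contra hc
  push_neg at hc
  have h1 := h (-c / (d + 1))
  have hp : (0:ℝ) < (d + 1) ^ 2 := by positivity
  have h2 : (-c / (d + 1)) * c + (-c / (d + 1)) ^ 2 * d = -c ^ 2 / (d + 1) ^ 2 := by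
    field_simp
    ring
  rw [h2, le_div_iff₀ hp, zero_mul] at h1
  nlinarith

lemma quad_coeff_zero {c d : ℝ} (hd : 0 ≤ d) (h : ∀ t : ℝ, 0 ≤ t * c + t ^ 2 * d) : c = 0 := by
  have hpos : 0 ≤ c := quad_aux hd h
  have hneg : 0 ≤ -c := quad_aux hd fun t => by nlinarith [h (-t)]
  linarith

end
end DirAux

theorem dirichlet_stmt9 {n : ℕ} (ν : Measure (Eucl n)) (hν : IsSymmLevy ν)
    (Ω : Set (Eucl n)) (hΩo : IsOpen Ω) (hΩne : Ω.Nonempty)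
    (hΩb : Bornology.IsBounded Ω)
    (f g : Eucl n → ℝ) (hf : MemLp f 2 ((volume : Measure (Eucl n)).restrict Ω))
    (u : Eucl n → ℝ) (hu : MemV ν Ω u) :
    IsWeakSol ν Ω f g u ↔
      ((∀ᵐ x ∂(volume : Measure (Eucl n)), x ∉ Ω → u x = g x) ∧
        ∀ v : Eucl n → ℝ, MemV ν Ω v →
          (∀ᵐ x ∂(volume : Measure (Eucl n)), x ∉ Ω → v x = g x) →
          energy ν Ω f u ≤ energy ν Ω f v) := by
  classical
  haveI : SigmaFinite ν := DirAux.nu_sigmaFinite hν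
  have hΩm : MeasurableSet Ω := hΩo.measurableSet
  have hf2 : Integrable (fun x => f x ^ 2) ((volume : Measure (Eucl n)).restrict Ω) :=
    (memLp_two_iff_integrable_sq hf.aestronglyMeasurable).mp hf
  have hfm := hf.aestronglyMeasurable
  constructor
  · rintro ⟨hMem, hbc, hsol⟩
    refine ⟨hbc, fun v hv hvbc => ?_⟩
    set φ : Eucl n → ℝ := fun x => v x - u x with hφdef
    have hφV : MemV ν Ω φ := by
      have h := DirAux.memV_combo hv hu (-1)
      have he : φ = fun x => v x + (-1) * u x := by
        funext x; show v x - u x = v x + (-1) * u x; ring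
      rw [he]; exact h
    have hφ0 : ∀ᵐ x ∂(volume : Measure (Eucl n)), x ∉ Ω → φ x = 0 := by
      filter_upwards [hbc, hvbc] with x h1 h2 hx
      show v x - u x = 0
      rw [h1 hx, h2 hx, sub_self]
    have hveq : v = fun x => u x + 1 * φ x := by
      funext x; show v x = u x + 1 * (v x - u x); ring
    have hexp := DirAux.energy_expand hν hΩm hf2 hfm hu hφV 1
    rw [← hveq] at hexp
    have hB := DirAux.formB_eq hν hΩm hu hφV hφ0
    have hsol' := hsol φ ⟨hφV, hφ0⟩
    have hQ : 0 ≤ ∫ p in DirAux.Sset Ω, DirAux.Fd φ p ^ 2 ∂(DirAux.pm ν) :=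
      integral_nonneg fun p => sq_nonneg _
    rw [hexp]
    nlinarith
  · rintro ⟨hbc, hmin⟩
    refine ⟨hu, hbc, fun φ hφ => ?_⟩
    have hQ0 : 0 ≤ (1/4) * ∫ p in DirAux.Sset Ω, DirAux.Fd φ p ^ 2 ∂(DirAux.pm ν) := by
      have : 0 ≤ ∫ p in DirAux.Sset Ω, DirAux.Fd φ p ^ 2 ∂(DirAux.pm ν) :=
        integral_nonneg fun p => sq_nonneg _
      linarith
    have key : ∀ t : ℝ, 0 ≤ t * ((1/2) * (∫ p in DirAux.Sset Ω,
          DirAux.Fd u p * DirAux.Fd φ p ∂(DirAux.pm ν)) - ∫ x in Ω, f x * φ x)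
        + t ^ 2 * ((1/4) * ∫ p in DirAux.Sset Ω, DirAux.Fd φ p ^ 2 ∂(DirAux.pm ν)) := by
      intro t
      have hvt : MemV ν Ω (fun x => u x + t * φ x) := DirAux.memV_combo hu hφ.1 t
      have hvtbc : ∀ᵐ x ∂(volume : Measure (Eucl n)), x ∉ Ω →
          (fun x => u x + t * φ x) x = g x := by
        filter_upwards [hbc, hφ.2] with x h1 h2 hx
        show u x + t * φ x = g x
        rw [h1 hx, h2 hx, mul_zero, add_zero]
      have h := hmin _ hvt hvtbc
      rw [DirAux.energy_expand hν hΩm hf2 hfm hu hφ.1 t] at h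
      linarith
    have hc := DirAux.quad_coeff_zero hQ0 key
    have hB := DirAux.formB_eq hν hΩm hu hφ.1 hφ.2
    linarith
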